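/- There exists a universal constant C > 0 such that for all integers n, k, d with k ≥ 1, d ≥ 1 and n ≥ k + d, there exist positive reals α_s, β_s for s = 1, …, n−k−d+1 satisfying α_s·β_s = ((n−k)·C(n−k−1, s−1))^{−1} for every s, such that both ∑_{s=1}^{n−k−d+1} C(n−k, s)·α_s² ≤ C·√((k+d)/d) and ∑_{s=1}^{n−k−d+1} (k+d)·C(n−k−d, s−1)·β_s² ≤ C·√((k+d)/d). -/

import Mathlib

open Finset Real

private lemma aux_sum_inv_sqrt (N : ℕ) :
    ∑ s ∈ Finset.Icc 1 N, (Real.sqrt s)⁻¹ ≤ 2 * Real.sqrt N := by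
  induction N with
  | zero => simp
  | succ n ih =>
    rw [Finset.sum_Icc_succ_top (by omega : 1 ≤ n + 1)]
    have hb : (0:ℝ) ≤ Real.sqrt n := Real.sqrt_nonneg _
    have ha : (0:ℝ) < Real.sqrt ((n:ℝ)+1) := Real.sqrt_pos.2 (by positivity)
    have ha2 : Real.sqrt ((n:ℝ)+1) ^ 2 = (n:ℝ)+1 := Real.sq_sqrt (by positivity)
    have hb2 : Real.sqrt (n:ℝ) ^ 2 = (n:ℝ) := Real.sq_sqrt (by positivity)
    have key : (Real.sqrt ((n:ℝ)+1))⁻¹ ≤ 2 * Real.sqrt ((n:ℝ)+1) - 2 * Real.sqrt n := by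
      rw [inv_eq_one_div, div_le_iff₀ ha]
      nlinarith [sq_nonneg (Real.sqrt ((n:ℝ)+1) - Real.sqrt (n:ℝ))]
    have hcast : ((n+1 : ℕ) : ℝ) = (n:ℝ) + 1 := by push_cast; ring
    rw [hcast]
    linarith

private lemma aux_geom (q : ℝ) (h0 : 0 ≤ q) (h1 : q < 1) (N : ℕ) :
    ∑ s ∈ Finset.Icc 1 N, q^(s-1) ≤ (1-q)⁻¹ := by
  have hre : ∑ s ∈ Finset.Icc 1 N, q^(s-1) = ∑ i ∈ Finset.range N, q^i := by
    rw [← Finset.Ico_add_one_right_eq_Icc, Finset.sum_Ico_eq_sum_range]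
    simp
  rw [hre, geom_sum_eq (by linarith : q ≠ 1),
    show q^N - 1 = -(1-q^N) by ring, show q - 1 = -(1-q) by ring, neg_div_neg_eq]
  have hpos : (0:ℝ) < 1 - q := by linarith
  rw [div_le_iff₀ hpos]
  have h1 : (1-q)⁻¹ * (1-q) = 1 := inv_mul_cancel₀ (by linarith)
  have hqn : 0 ≤ q ^ N := pow_nonneg h0 N
  linarith

private lemma aux_split (q : ℝ) (h0 : 0 ≤ q) (h1 : q < 1) (N : ℕ) :
    ∑ s ∈ Finset.Icc 1 N, q^(s-1) * (Real.sqrt s)⁻¹ ≤ 4 * (Real.sqrt (1-q))⁻¹ := by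
  set T : ℕ := ⌈(1-q)⁻¹⌉₊ with hT
  have hq1 : (0:ℝ) < 1 - q := by linarith
  have hx1 : (1:ℝ) ≤ (1-q)⁻¹ := (one_le_inv₀ hq1).2 (by linarith)
  have hT1 : 1 ≤ T := by
    rw [hT]; exact Nat.one_le_ceil_iff.2 (by linarith)
  have hTge : (1-q)⁻¹ ≤ (T:ℝ) := Nat.le_ceil _
  have hTle : (T:ℝ) ≤ 2 * (1-q)⁻¹ := by
    have := Nat.ceil_lt_add_one (by positivity : (0:ℝ) ≤ (1-q)⁻¹)
    rw [← hT] at this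
    linarith
  have hsT : (0:ℝ) < Real.sqrt T := Real.sqrt_pos.2 (by positivity)
  -- pointwise bound
  have hpt : ∀ s ∈ Finset.Icc 1 N, q^(s-1) * (Real.sqrt s)⁻¹ ≤
      (if s ≤ T then (Real.sqrt s)⁻¹ else 0) + q^(s-1) * (Real.sqrt T)⁻¹ := by
    intro s hs
    simp only [Finset.mem_Icc] at hs
    have hss : (0:ℝ) < Real.sqrt s := Real.sqrt_pos.2 (by exact_mod_cast by omega)
    by_cases h : s ≤ T
    · simp only [h, if_true]
      have h1' : q^(s-1) * (Real.sqrt s)⁻¹ ≤ (Real.sqrt s)⁻¹ := by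
        have : q^(s-1) ≤ 1 := pow_le_one₀ h0 h1.le
        nlinarith [inv_pos.2 hss]
      have h2' : 0 ≤ q^(s-1) * (Real.sqrt T)⁻¹ := by positivity
      linarith
    · simp only [h, if_false, zero_add]
      have : (Real.sqrt s)⁻¹ ≤ (Real.sqrt T)⁻¹ := by
        apply inv_anti₀ hsT
        exact Real.sqrt_le_sqrt (by exact_mod_cast Nat.le_of_lt (by omega))
      have hq' : 0 ≤ q^(s-1) := pow_nonneg h0 _
      nlinarith
  calc ∑ s ∈ Finset.Icc 1 N, q^(s-1) * (Real.sqrt s)⁻¹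
      ≤ ∑ s ∈ Finset.Icc 1 N, ((if s ≤ T then (Real.sqrt s)⁻¹ else 0) + q^(s-1) * (Real.sqrt T)⁻¹) :=
        Finset.sum_le_sum hpt
    _ = (∑ s ∈ Finset.Icc 1 N, (if s ≤ T then (Real.sqrt s)⁻¹ else 0))
        + (∑ s ∈ Finset.Icc 1 N, q^(s-1)) * (Real.sqrt T)⁻¹ := by
        rw [Finset.sum_add_distrib, Finset.sum_mul]
    _ ≤ 4 * (Real.sqrt (1-q))⁻¹ := by
        have hfirst : (∑ s ∈ Finset.Icc 1 N, (if s ≤ T then (Real.sqrt s)⁻¹ else 0))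
            ≤ ∑ s ∈ Finset.Icc 1 T, (Real.sqrt s)⁻¹ := by
          rw [← Finset.sum_filter]
          apply Finset.sum_le_sum_of_subset_of_nonneg
          · intro x hx
            simp only [Finset.mem_filter, Finset.mem_Icc] at hx ⊢
            omega
          · intro i _ _; positivity
        have h2T : ∑ s ∈ Finset.Icc 1 T, (Real.sqrt s)⁻¹ ≤ 2 * Real.sqrt T :=
          aux_sum_inv_sqrt T
        have hgeom : (∑ s ∈ Finset.Icc 1 N, q^(s-1)) ≤ (1-q)⁻¹ := aux_geom q h0 h1 N
        have hs1q : (0:ℝ) < Real.sqrt (1-q) := Real.sqrt_pos.2 hq1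
        -- √T ≤ 2√2 ... bound pieces
        have hb1 : Real.sqrt T ≤ Real.sqrt 2 * (Real.sqrt (1-q))⁻¹ := by
          have : Real.sqrt T ≤ Real.sqrt (2 * (1-q)⁻¹) := Real.sqrt_le_sqrt hTle
          rw [Real.sqrt_mul (by norm_num), Real.sqrt_inv] at this
          exact this
        have hb2 : (Real.sqrt T)⁻¹ ≤ Real.sqrt (1-q) := by
          have h' : (Real.sqrt (1-q))⁻¹ ≤ Real.sqrt T := by
            have : Real.sqrt ((1-q)⁻¹) ≤ Real.sqrt T := Real.sqrt_le_sqrt hTge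
            rwa [Real.sqrt_inv] at this
          calc (Real.sqrt T)⁻¹ ≤ ((Real.sqrt (1-q))⁻¹)⁻¹ :=
                inv_anti₀ (by positivity) h'
            _ = Real.sqrt (1-q) := inv_inv _
        have hgs : 0 ≤ ∑ s ∈ Finset.Icc 1 N, q^(s-1) :=
          Finset.sum_nonneg fun i _ => pow_nonneg h0 _
        have hlast : (∑ s ∈ Finset.Icc 1 N, q^(s-1)) * (Real.sqrt T)⁻¹
            ≤ (1-q)⁻¹ * Real.sqrt (1-q) := by
          apply mul_le_mul hgeom hb2 (by positivity) (by positivity)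
        have heq : (1-q)⁻¹ * Real.sqrt (1-q) = (Real.sqrt (1-q))⁻¹ := by
          rw [← Real.sq_sqrt hq1.le]
          field_simp
          rw [Real.sqrt_sq (Real.sqrt_nonneg _)]
        have hsqrt2 : Real.sqrt 2 ≤ 1.5 := by
          rw [show (1.5:ℝ) = Real.sqrt (1.5^2) by rw [Real.sqrt_sq]; norm_num]
          apply Real.sqrt_le_sqrt; norm_num
        rw [heq] at hlast
        have : (0:ℝ) < (Real.sqrt (1-q))⁻¹ := by positivity
        nlinarith

private lemma aux_ratio (m d : ℕ) (hd : 1 ≤ d) (hdm : d ≤ m) :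
    ∀ j, j ≤ m - d →
      ((m-d).choose j : ℝ) ≤ ((m-1).choose j : ℝ) * (((m-d:ℕ):ℝ)/((m-1:ℕ):ℝ))^j := by
  intro j
  induction j with
  | zero => simp
  | succ j ih =>
    intro hj
    have hj' : j ≤ m - d := by omega
    have ihj := ih hj'
    set a := m - d with ha
    set b := m - 1 with hb
    have hab : a ≤ b := by omega
    have hja : j + 1 ≤ a := hj
    have hb0 : 1 ≤ b := by omega
    have hbR : (0:ℝ) < (b:ℝ) := by exact_mod_cast hb0
    -- nat identities
    have ida : (a.choose (j+1) : ℝ) * (j+1) = (a.choose j : ℝ) * ((a:ℝ) - j) := by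
      have h := Nat.choose_succ_right_eq a j
      have h2 : ((a.choose (j+1) * (j+1) : ℕ) : ℝ) = ((a.choose j * (a - j) : ℕ) : ℝ) := by
        exact_mod_cast h
      push_cast [Nat.cast_sub (show j ≤ a by omega)] at h2
      linarith
    have idb : (b.choose (j+1) : ℝ) * (j+1) = (b.choose j : ℝ) * ((b:ℝ) - j) := by
      have h := Nat.choose_succ_right_eq b j
      have h2 : ((b.choose (j+1) * (j+1) : ℕ) : ℝ) = ((b.choose j * (b - j) : ℕ) : ℝ) := by
        exact_mod_cast h
      push_cast [Nat.cast_sub (show j ≤ b by omega)] at h2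
      linarith
    have hkey : ((a:ℝ) - j) * (b:ℝ) ≤ ((b:ℝ) - j) * (a:ℝ) := by
      have haj : (j:ℝ) ≤ (a:ℝ) := by exact_mod_cast by omega
      have habR : (a:ℝ) ≤ (b:ℝ) := by exact_mod_cast hab
      nlinarith [Nat.cast_nonneg (α := ℝ) j]
    have hcj : (0:ℝ) ≤ (b.choose j : ℝ) := Nat.cast_nonneg _
    have hrj : (0:ℝ) ≤ ((a:ℝ)/(b:ℝ))^j := by positivity
    have hj1 : (0:ℝ) < (j:ℝ)+1 := by positivity
    have haj0 : (0:ℝ) ≤ (a:ℝ) - j := by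
      have : (j:ℝ) ≤ (a:ℝ) := by exact_mod_cast by omega
      linarith
    have hbj0 : (0:ℝ) ≤ (b:ℝ) - j := by
      have : (j:ℝ) ≤ (b:ℝ) := by exact_mod_cast by omega
      linarith
    -- target
    rw [pow_succ]
    have step1 : (a.choose (j+1) : ℝ) * ((j:ℝ)+1) ≤
        ((b.choose j : ℝ) * ((a:ℝ)/(b:ℝ))^j) * ((a:ℝ) - j) := by
      rw [ida]
      apply mul_le_mul_of_nonneg_right ihj haj0
    have step2 : ((b.choose j : ℝ) * ((a:ℝ)/(b:ℝ))^j) * ((a:ℝ) - j) ≤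
        ((b.choose j : ℝ) * ((b:ℝ) - j)) * (((a:ℝ)/(b:ℝ))^j * ((a:ℝ)/(b:ℝ))) := by
      have h1 : ((a:ℝ) - j) ≤ ((b:ℝ) - j) * ((a:ℝ)/(b:ℝ)) := by
        rw [show ((b:ℝ)-j)*((a:ℝ)/(b:ℝ)) = (((b:ℝ)-j)*(a:ℝ))/(b:ℝ) by ring,
          le_div_iff₀ hbR]
        linarith [hkey]
      calc ((b.choose j : ℝ) * ((a:ℝ)/(b:ℝ))^j) * ((a:ℝ) - j)
          ≤ ((b.choose j : ℝ) * ((a:ℝ)/(b:ℝ))^j) * (((b:ℝ) - j) * ((a:ℝ)/(b:ℝ))) := by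
            apply mul_le_mul_of_nonneg_left h1 (by positivity)
        _ = ((b.choose j : ℝ) * ((b:ℝ) - j)) * (((a:ℝ)/(b:ℝ))^j * ((a:ℝ)/(b:ℝ))) := by ring
    have step3 : ((b.choose j : ℝ) * ((b:ℝ) - j)) * (((a:ℝ)/(b:ℝ))^j * ((a:ℝ)/(b:ℝ)))
        = (b.choose (j+1) : ℝ) * ((j:ℝ)+1) * (((a:ℝ)/(b:ℝ))^j * ((a:ℝ)/(b:ℝ))) := by
      rw [idb]
    have : (a.choose (j+1) : ℝ) * ((j:ℝ)+1) ≤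
        (b.choose (j+1) : ℝ) * (((a:ℝ)/(b:ℝ))^j * ((a:ℝ)/(b:ℝ))) * ((j:ℝ)+1) := by
      calc (a.choose (j+1) : ℝ) * ((j:ℝ)+1) ≤ _ := step1
        _ ≤ _ := step2
        _ = _ := by rw [step3]; ring
    exact le_of_mul_le_mul_right (by linarith) hj1

set_option maxHeartbeats 1000000 in
theorem stmt4 : ∃ C : ℝ, 0 < C ∧ ∀ n k d : ℕ, 1 ≤ k → 1 ≤ d → k + d ≤ n →
    ∃ α β : ℕ → ℝ,
      (∀ s : ℕ, 1 ≤ s → s ≤ n - k - d + 1 →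
        0 < α s ∧ 0 < β s ∧
        α s * β s = (((n:ℝ) - k) * (Nat.choose (n - k - 1) (s - 1) : ℝ))⁻¹) ∧
      (∑ s ∈ Finset.Icc 1 (n - k - d + 1), (Nat.choose (n - k) s : ℝ) * (α s)^2
        ≤ C * Real.sqrt (((k:ℝ) + d) / d)) ∧
      (∑ s ∈ Finset.Icc 1 (n - k - d + 1),
          ((k:ℝ) + d) * (Nat.choose (n - k - d) (s - 1) : ℝ) * (β s)^2
        ≤ C * Real.sqrt (((k:ℝ) + d) / d)) := by
  refine ⟨8, by norm_num, fun n k d hk hd hkd => ?_⟩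
  set m : ℕ := n - k with hm
  have hdm : d ≤ m := by omega
  have hm1 : 1 ≤ m := by omega
  have hmR : (0:ℝ) < (m:ℝ) := by exact_mod_cast hm1
  set N : ℕ := m - d + 1 with hN
  have hNn : n - k - d + 1 = N := by omega
  have hn1 : n - k - 1 = m - 1 := by omega
  have hnd : n - k - d = m - d := by omega
  set K : ℝ := (k:ℝ) + d with hK
  have hKpos : (0:ℝ) < K := by positivity
  set ρ : ℝ := ((m-d : ℕ):ℝ)/((m-1 : ℕ):ℝ) with hρ
  set q : ℝ := Real.sqrt ρ with hq
  have hρ0 : 0 ≤ ρ := by positivity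
  have hρ1 : ρ ≤ 1 := by
    rcases Nat.eq_or_lt_of_le hm1 with h | h
    · rcases Nat.eq_or_lt_of_le hdm with h2 | h2
      · simp [hρ, ← h2]
      · omega
    · have hb : (0:ℝ) < ((m-1:ℕ):ℝ) := by exact_mod_cast (by omega : 1 ≤ m - 1)
      rw [hρ, div_le_one hb]
      exact_mod_cast (by omega : m - d ≤ m - 1)
  have hq0 : 0 ≤ q := Real.sqrt_nonneg _
  have hq1 : q ≤ 1 := by
    rw [hq, show (1:ℝ) = Real.sqrt 1 by simp]
    exact Real.sqrt_le_sqrt hρ1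
  have hq2 : q^2 = ρ := Real.sq_sqrt hρ0
  set P : ℕ → ℝ := fun s => ((m:ℝ) * (((m-1).choose (s-1) : ℕ):ℝ))⁻¹ with hP
  set c : ℕ → ℝ := fun s => Real.sqrt (K * s / m) * q^(s-1) with hc
  clear_value c P q ρ K N m
  have hdR : (0:ℝ) < (d:ℝ) := by exact_mod_cast hd
  have hchoose_pos : ∀ s, 1 ≤ s → s ≤ N → (0:ℝ) < (((m-1).choose (s-1) : ℕ):ℝ) := by
    intro s h1 h2
    exact_mod_cast Nat.choose_pos (by omega)
  have hPpos : ∀ s, 1 ≤ s → s ≤ N → 0 < P s := by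
    intro s h1 h2
    have := hchoose_pos s h1 h2
    rw [hP]
    positivity
  have hqpow : ∀ s, 1 ≤ s → s ≤ N → 0 < q^(s-1) := by
    intro s h1 h2
    rcases Nat.eq_or_lt_of_le h1 with h | h
    · simp [← h]
    · have hmd : 1 ≤ m - d := by omega
      have hm1' : 1 ≤ m - 1 := by omega
      have hρpos : 0 < ρ := by
        rw [hρ]
        apply div_pos
        · exact_mod_cast hmd
        · exact_mod_cast hm1'
      have : 0 < q := by rw [hq]; exact Real.sqrt_pos.2 hρpos
      exact pow_pos this _
  have hcpos : ∀ s, 1 ≤ s → s ≤ N → 0 < c s := by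
    intro s h1 h2
    have hsR : (0:ℝ) < (s:ℝ) := by exact_mod_cast h1
    simp only [hc]
    exact mul_pos (Real.sqrt_pos.2 (div_pos (mul_pos hKpos hsR) hmR)) (hqpow s h1 h2)
  -- the main bound on the weighted geometric sum
  have hB : ∑ s ∈ Finset.Icc 1 N, q^(s-1) * (Real.sqrt s)⁻¹ ≤ 8 * Real.sqrt ((m:ℝ)/d) := by
    rcases lt_or_ge d 2 with hd2 | hd2
    · -- d = 1
      have hd1 : d = 1 := by omega
      have hN' : N = m := by omega
      have h1 : ∑ s ∈ Finset.Icc 1 N, q^(s-1) * (Real.sqrt s)⁻¹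
          ≤ ∑ s ∈ Finset.Icc 1 N, (Real.sqrt s)⁻¹ := by
        apply Finset.sum_le_sum
        intro s hs
        have : q^(s-1) ≤ 1 := pow_le_one₀ hq0 hq1
        have hss : (0:ℝ) ≤ (Real.sqrt s)⁻¹ := by positivity
        nlinarith
      have h2 := aux_sum_inv_sqrt N
      have h3 : Real.sqrt (N:ℝ) = Real.sqrt ((m:ℝ)/d) := by
        rw [hN', hd1]
        norm_num
      have h4 : (0:ℝ) ≤ Real.sqrt ((m:ℝ)/d) := Real.sqrt_nonneg _
      rw [h3] at h2
      linarith
    · -- d ≥ 2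
      have hgap : (d:ℝ)/(4*m) ≤ 1 - q := by
        rcases Nat.eq_or_lt_of_le hdm with hmd | hmd
        · -- m = d
          have : ρ = 0 := by
            rw [hρ, ← hmd]
            simp
          have : q = 0 := by rw [hq, this, Real.sqrt_zero]
          rw [this]
          rw [div_le_iff₀ (by positivity)]
          have : (d:ℝ) ≤ (m:ℝ) := by exact_mod_cast hdm
          nlinarith
        · -- d < m
          have hm1' : 1 ≤ m - 1 := by omega
          have hA : ((m-d : ℕ):ℝ) = (m:ℝ) - d := by
            rw [Nat.cast_sub (by omega)]
          have hBc : ((m-1 : ℕ):ℝ) = (m:ℝ) - 1 := by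
            rw [Nat.cast_sub (by omega)]; norm_num
          have hBpos : (0:ℝ) < (m:ℝ) - 1 := by
            have : (1:ℝ) < (m:ℝ) := by exact_mod_cast (by omega : 1 < m)
            linarith
          have hρval : 1 - ρ = ((d:ℝ) - 1)/((m:ℝ) - 1) := by
            rw [hρ, hA, hBc]
            field_simp
            ring
          have h2q : 1 - ρ ≤ 2 * (1 - q) := by
            nlinarith [hq2, hq0, hq1]
          have hfinal : (d:ℝ)/(4*m) ≤ ((d:ℝ) - 1)/((m:ℝ) - 1)/2 := by
            rw [div_le_div_iff₀ (by positivity) (by norm_num), div_mul_eq_mul_div,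
              le_div_iff₀ (by positivity)]
            have hd2R : (2:ℝ) ≤ (d:ℝ) := by exact_mod_cast hd2
            have hmdR : (d:ℝ) + 1 ≤ (m:ℝ) := by exact_mod_cast (by omega : d + 1 ≤ m)
            nlinarith
          rw [hρval] at h2q
          linarith
      have hqlt : q < 1 := by
        have : (0:ℝ) < (d:ℝ)/(4*m) := by positivity
        linarith
      have h1 := aux_split q hq0 hqlt N
      have h1q : (0:ℝ) < 1 - q := by
        have : (0:ℝ) < (d:ℝ)/(4*m) := by positivity
        linarith
      have hinv : (1-q)⁻¹ ≤ 4*(m:ℝ)/d := by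
        rw [inv_le_comm₀ h1q (by positivity)]
        rw [inv_div]
        calc (d:ℝ)/(4*m) ≤ 1 - q := hgap
          _ = 1 - q := rfl
      have h2 : (Real.sqrt (1-q))⁻¹ ≤ 2 * Real.sqrt ((m:ℝ)/d) := by
        rw [← Real.sqrt_inv]
        have : Real.sqrt ((1-q)⁻¹) ≤ Real.sqrt (4*(m:ℝ)/d) := Real.sqrt_le_sqrt hinv
        have h4 : Real.sqrt (4*(m:ℝ)/d) = 2 * Real.sqrt ((m:ℝ)/d) := by
          rw [show 4*(m:ℝ)/d = 4*((m:ℝ)/d) by ring, Real.sqrt_mul (by norm_num),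
            show Real.sqrt 4 = 2 by rw [show (4:ℝ) = 2^2 by norm_num, Real.sqrt_sq]; norm_num]
        rw [h4] at this
        exact this
      calc ∑ s ∈ Finset.Icc 1 N, q^(s-1) * (Real.sqrt s)⁻¹ ≤ 4 * (Real.sqrt (1-q))⁻¹ := h1
        _ ≤ 4 * (2 * Real.sqrt ((m:ℝ)/d)) := by
            apply mul_le_mul_of_nonneg_left h2 (by norm_num)
        _ = 8 * Real.sqrt ((m:ℝ)/d) := by ring
  set g : ℕ → ℝ := fun s => Real.sqrt (K/m) * (q^(s-1) * (Real.sqrt s)⁻¹) with hg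
  clear_value g
  have hsumg : ∑ s ∈ Finset.Icc 1 N, g s ≤ 8 * Real.sqrt (K/d) := by
    simp only [hg]
    rw [← Finset.mul_sum]
    have h1 : Real.sqrt (K/m) * (∑ s ∈ Finset.Icc 1 N, q^(s-1) * (Real.sqrt s)⁻¹)
        ≤ Real.sqrt (K/m) * (8 * Real.sqrt ((m:ℝ)/d)) :=
      mul_le_mul_of_nonneg_left hB (Real.sqrt_nonneg _)
    have e : Real.sqrt (K/m) * Real.sqrt ((m:ℝ)/d) = Real.sqrt (K/d) := by
      rw [← Real.sqrt_mul (by positivity) ((m:ℝ)/d),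
        show K/(m:ℝ) * ((m:ℝ)/d) = K/d by field_simp]
    have h2 : Real.sqrt (K/m) * (8 * Real.sqrt ((m:ℝ)/d)) = 8 * Real.sqrt (K/d) := by
      rw [← e]; ring
    linarith
  -- the term identities
  have hterm1 : ∀ s ∈ Finset.Icc 1 N, ((m.choose s : ℕ):ℝ) * (Real.sqrt (P s * c s))^2 = g s := by
    intro s hs
    simp only [Finset.mem_Icc] at hs
    obtain ⟨h1, h2⟩ := hs
    have hPc : 0 ≤ P s * c s := le_of_lt (mul_pos (hPpos s h1 h2) (hcpos s h1 h2))
    rw [Real.sq_sqrt hPc]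
    have idm : (m:ℝ) * (((m-1).choose (s-1) : ℕ):ℝ) = ((m.choose s : ℕ):ℝ) * s := by
      have h := Nat.add_one_mul_choose_eq (m-1) (s-1)
      rw [
        show m - 1 + 1 = m by omega, show s - 1 + 1 = s by omega] at h
      exact_mod_cast h
    have hchooseM : (0:ℝ) < ((m.choose s : ℕ):ℝ) := by
      exact_mod_cast Nat.choose_pos (by omega : s ≤ m)
    have hsR : (0:ℝ) < (s:ℝ) := by exact_mod_cast h1
    have hfirst : ((m.choose s : ℕ):ℝ) * P s = (s:ℝ)⁻¹ := by
      simp only [hP]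
      rw [idm, mul_inv]
      field_simp
    have hs2 : Real.sqrt (K * s / m) = Real.sqrt (K/m) * Real.sqrt s := by
      rw [← Real.sqrt_mul (by positivity)]
      congr 1
      field_simp
    have hss : Real.sqrt s * Real.sqrt s = (s:ℝ) := Real.mul_self_sqrt hsR.le
    have hsne : Real.sqrt s ≠ 0 := by positivity
    have hinv : ((s:ℝ))⁻¹ = (Real.sqrt s)⁻¹ * (Real.sqrt s)⁻¹ := by
      rw [← mul_inv, hss]
    have hcancel : (Real.sqrt s)⁻¹ * Real.sqrt s = 1 := inv_mul_cancel₀ hsne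
    calc ((m.choose s : ℕ):ℝ) * (P s * c s) = (((m.choose s : ℕ):ℝ) * P s) * c s := by ring
      _ = (s:ℝ)⁻¹ * c s := by rw [hfirst]
      _ = g s := by
          simp only [hc, hg]
          rw [hs2, hinv]
          linear_combination (Real.sqrt (K/m) * (Real.sqrt s)⁻¹ * q^(s-1)) * hcancel
  have hterm2 : ∀ s ∈ Finset.Icc 1 N,
      K * (((m-d).choose (s-1) : ℕ):ℝ) * (Real.sqrt (P s / c s))^2 ≤ g s := by
    intro s hs
    simp only [Finset.mem_Icc] at hs
    obtain ⟨h1, h2⟩ := hs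
    have hcp := hcpos s h1 h2
    have hPp := hPpos s h1 h2
    have hqp := hqpow s h1 h2
    have hPc : 0 ≤ P s / c s := le_of_lt (div_pos hPp hcp)
    rw [Real.sq_sqrt hPc]
    have hratio := aux_ratio m d hd hdm (s-1) (by omega)
    rw [← hρ] at hratio
    have hchoose := hchoose_pos s h1 h2
    have hsR : (0:ℝ) < (s:ℝ) := by exact_mod_cast h1
    have hs2 : Real.sqrt (K * s / m) = Real.sqrt (K/m) * Real.sqrt s := by
      rw [← Real.sqrt_mul (by positivity)]
      congr 1
      field_simp
    have hss : Real.sqrt s * Real.sqrt s = (s:ℝ) := Real.mul_self_sqrt hsR.le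
    have hKm : Real.sqrt (K/m) * Real.sqrt (K/m) = K/m := Real.mul_self_sqrt (by positivity)
    have hsne : Real.sqrt s ≠ 0 := by positivity
    have hKmne : Real.sqrt (K/m) ≠ 0 := by
      refine ne_of_gt (Real.sqrt_pos.2 ?_)
      positivity
    have hqne : q^(s-1) ≠ 0 := ne_of_gt hqp
    have hρpow : ρ^(s-1) = q^(s-1) * q^(s-1) := by
      rw [← hq2, ← pow_add, ← two_mul, pow_mul]
    have step : K * (((m-d).choose (s-1) : ℕ):ℝ) * (P s / c s)
        ≤ K * ((((m-1).choose (s-1) : ℕ):ℝ) * ρ^(s-1)) * (P s / c s) :=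
      mul_le_mul_of_nonneg_right
        (mul_le_mul_of_nonneg_left hratio hKpos.le) hPc
    have heq : K * ((((m-1).choose (s-1) : ℕ):ℝ) * ρ^(s-1)) * (P s / c s) = g s := by
      have hcs : c s = Real.sqrt (K/m) * Real.sqrt s * q^(s-1) := by
        simp only [hc]
        rw [hs2]
      have hPv : P s = ((m:ℝ) * (((m-1).choose (s-1) : ℕ):ℝ))⁻¹ := by simp only [hP]
      simp only [hg]
      rw [hρpow, hcs, hPv]
      set B : ℝ := (((m-1).choose (s-1) : ℕ):ℝ) with hBdef
      set X : ℝ := Real.sqrt (K/m) with hXdef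
      set S : ℝ := Real.sqrt s with hSdef
      set Q : ℝ := q^(s-1) with hQdef
      clear_value B X S Q
      have c1 : B * B⁻¹ = 1 := mul_inv_cancel₀ (ne_of_gt hchoose)
      have c3 : X * X⁻¹ = 1 := mul_inv_cancel₀ hKmne
      have c5 : Q * Q⁻¹ = 1 := mul_inv_cancel₀ hqne
      have e6 : K * (m:ℝ)⁻¹ = X * X := by rw [hKm, div_eq_mul_inv]
      calc K * (B * (Q*Q)) * (((m:ℝ)*B)⁻¹ / (X*S*Q))
          = (B * B⁻¹) * (Q * Q⁻¹) * (K * (m:ℝ)⁻¹ * Q * X⁻¹ * S⁻¹) := by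
            rw [mul_inv, div_eq_mul_inv, mul_inv, mul_inv]; ring
        _ = K * (m:ℝ)⁻¹ * Q * X⁻¹ * S⁻¹ := by rw [c1, c5]; ring
        _ = (X * X⁻¹) * X * Q * S⁻¹ := by rw [e6]; ring
        _ = X * (Q * S⁻¹) := by rw [c3]; ring
    calc K * (((m-d).choose (s-1) : ℕ):ℝ) * (P s / c s) ≤ _ := step
      _ = g s := heq
  refine ⟨fun s => Real.sqrt (P s * c s), fun s => Real.sqrt (P s / c s), ?_, ?_, ?_⟩
  · intro s hs1 hs2
    have hs2 : s ≤ N := by omega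
    have hPp := hPpos s hs1 hs2
    have hcp := hcpos s hs1 hs2
    refine ⟨Real.sqrt_pos.2 (mul_pos hPp hcp), Real.sqrt_pos.2 (div_pos hPp hcp), ?_⟩
    rw [← Real.sqrt_mul (le_of_lt (mul_pos hPp hcp)),
      show P s * c s * (P s / c s) = P s * P s * (c s / c s) by ring,
      div_self (ne_of_gt hcp), mul_one, Real.sqrt_mul_self hPp.le]
    have hnk : ((n:ℝ) - k) = (m:ℝ) := by
      rw [hm, Nat.cast_sub (by omega : k ≤ n)]
    rw [hnk]
    simp only [hP]
  · calc ∑ s ∈ Finset.Icc 1 N, ((m.choose s : ℕ):ℝ) * (Real.sqrt (P s * c s))^2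
        = ∑ s ∈ Finset.Icc 1 N, g s := Finset.sum_congr rfl hterm1
      _ ≤ 8 * Real.sqrt (K/d) := hsumg
  · calc ∑ s ∈ Finset.Icc 1 N, K * (((m-d).choose (s-1) : ℕ):ℝ) * (Real.sqrt (P s / c s))^2
        ≤ ∑ s ∈ Finset.Icc 1 N, g s := Finset.sum_le_sum hterm2
      _ ≤ 8 * Real.sqrt (K/d) := hsumg
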